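/- In any PBE (σ*, β*), both servers carry a positive mass of agents: θ(1−σ^t*_h) + (1−θ)σ^t*_l > 0 and θσ^t*_h + (1−θ)(1−σ^t*_l) > 0. In particular, no pooling equilibrium (in which all agents send the same signal) exists. -/
import Mathlib


open Set

/-- Perfect Bayesian equilibrium of the two-server misbehavior-inspection signaling game.
The strategy profile is `(sh, sl, dH, dL)` (misbehavior rates of types `h` and `l`, and the
operator's inspection probabilities on servers `H` and `L`) and the belief assessment is
`(bhH, blH, bhL, blL)`. -/
def IsPBE (θ pth ptl pd Fh Fl : ℝ) (cH cL : ℝ → ℝ → ℝ)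
    (sh sl dH dL bhH blH bhL blL : ℝ) : Prop :=
  sh ∈ Icc (0:ℝ) 1 ∧ sl ∈ Icc (0:ℝ) 1 ∧ dH ∈ Icc (0:ℝ) 1 ∧ dL ∈ Icc (0:ℝ) 1 ∧
  bhH ∈ Icc (0:ℝ) 1 ∧ blH = 1 - bhH ∧ bhL ∈ Icc (0:ℝ) 1 ∧ blL = 1 - bhL ∧
  -- sequential rationality of type h agents
  (0 < sh → -(cL sh sl) - pth - Fh * dL ≥ -(cH sh sl)) ∧
  (sh < 1 → -(cL sh sl) - pth - Fh * dL ≤ -(cH sh sl)) ∧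
  -- sequential rationality of type l agents
  (0 < sl → -(cH sh sl) - ptl - Fl * dH ≥ -(cL sh sl)) ∧
  (sl < 1 → -(cH sh sl) - ptl - Fl * dH ≤ -(cL sh sl)) ∧
  -- operator optimality on servers H and L
  (∀ x ∈ Icc (0:ℝ) 1, (-pd + Fl * blH) * x ≤ (-pd + Fl * blH) * dH) ∧
  (∀ x ∈ Icc (0:ℝ) 1, (-pd + Fh * bhL) * x ≤ (-pd + Fh * bhL) * dL) ∧
  -- consistency of beliefs (Bayes' rule)
  (0 < θ * (1 - sh) + (1 - θ) * sl →
    bhH = θ * (1 - sh) / (θ * (1 - sh) + (1 - θ) * sl)) ∧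
  (0 < θ * sh + (1 - θ) * (1 - sl) →
    bhL = θ * sh / (θ * sh + (1 - θ) * (1 - sl)))

/-- In any PBE, both servers carry a positive mass of agents; in particular no
pooling equilibrium exists. -/
theorem no_pooling
    (θ pth ptl pd Fh Fl : ℝ) (cH cL : ℝ → ℝ → ℝ)
    (hθ : θ ∈ Ioo (0:ℝ) 1) (hpth : 0 ≤ pth) (hptl : 0 < ptl)
    (hpd : 0 < pd) (hFh : 0 ≤ Fh) (hFl : 0 ≤ Fl)
    (hA1 : cH 0 0 < cL 0 0 ∧ cL 0 1 < cH 0 1)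
    (hA2Hh : ∀ y ∈ Icc (0:ℝ) 1, StrictAntiOn (fun x => cH x y) (Icc 0 1))
    (hA2Hl : ∀ x ∈ Icc (0:ℝ) 1, StrictMonoOn (fun y => cH x y) (Icc 0 1))
    (hA2Lh : ∀ y ∈ Icc (0:ℝ) 1, StrictMonoOn (fun x => cL x y) (Icc 0 1))
    (hA2Ll : ∀ x ∈ Icc (0:ℝ) 1, StrictAntiOn (fun y => cL x y) (Icc 0 1))
    (sh sl dH dL bhH blH bhL blL : ℝ)
    (hPBE : IsPBE θ pth ptl pd Fh Fl cH cL sh sl dH dL bhH blH bhL blL)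
    : 0 < θ * (1 - sh) + (1 - θ) * sl ∧ 0 < θ * sh + (1 - θ) * (1 - sl) := by
  obtain ⟨hsh, hsl, hdH, hdL, _, _, _, _, hSRh, _, hSRl, _, _⟩ := hPBE
  obtain ⟨hθ0, hθ1⟩ := hθ
  obtain ⟨hsh0, hsh1⟩ := hsh
  obtain ⟨hsl0, hsl1⟩ := hsl
  have h01 : (0:ℝ) ∈ Icc (0:ℝ) 1 := by constructor <;> norm_num
  have h11 : (1:ℝ) ∈ Icc (0:ℝ) 1 := by constructor <;> norm_num
  constructor
  · by_contra h
    push_neg at h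
    have e1 : sh = 1 := by nlinarith
    have e2 : sl = 0 := by nlinarith
    have hsr := hSRh (by rw [e1]; norm_num)
    rw [e1, e2] at hsr
    have c1 : cH 1 0 < cH 0 0 := hA2Hh 0 h01 h01 h11 (by norm_num)
    have c2 : cL 0 0 < cL 1 0 := hA2Lh 0 h01 h01 h11 (by norm_num)
    have : 0 ≤ Fh * dL := mul_nonneg hFh hdL.1
    linarith [hA1.1]
  · by_contra h
    push_neg at h
    have e1 : sh = 0 := by nlinarith
    have e2 : sl = 1 := by nlinarith
    have hsr := hSRl (by rw [e2]; norm_num)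
    rw [e1, e2] at hsr
    have : 0 ≤ Fl * dH := mul_nonneg hFl hdH.1
    linarith [hA1.2]
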